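/- (Optimal cross-entropy loss equals ln 2 minus the Jensen–Shannon divergence.) Let p₀ and p₁ be probability distributions on 𝒳. For a classifier ŷ: 𝒳 → (0,1), define the binary cross-entropy loss L(ŷ) = −½ Σ_{x∈𝒳} p₀(x) ln(1 − ŷ(x)) − ½ Σ_{x∈𝒳} p₁(x) ln ŷ(x). Then for every classifier ŷ one has L(ŷ) ≥ ln 2 − JS[p₀, p₁], and the Bayes-optimal classifier ŷ^opt(x) = p₁(x) / (p₀(x) + p₁(x)) achieves equality: L(ŷ^opt) = ln 2 − JS[p₀, p₁]. -/

import Mathlib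

open Finset Real

/-- Binary cross-entropy loss of a classifier `yhat` for distributions `p₀` (label 0)
and `p₁` (label 1). -/
noncomputable def bceLoss {X : Type*} [Fintype X] (p₀ p₁ yhat : X → ℝ) : ℝ :=
  -(1 / 2) * (∑ x : X, p₀ x * Real.log (1 - yhat x))
    - (1 / 2) * (∑ x : X, p₁ x * Real.log (yhat x))

/-- Kullback–Leibler divergence on a finite set. -/
noncomputable def klDiv {X : Type*} [Fintype X] (p q : X → ℝ) : ℝ :=
  ∑ x : X, p x * Real.log (p x / q x)

/-- Jensen–Shannon divergence on a finite set. -/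
noncomputable def jsDiv {X : Type*} [Fintype X] (p q : X → ℝ) : ℝ :=
  (1 / 2) * klDiv p (fun x => (p x + q x) / 2) + (1 / 2) * klDiv q (fun x => (p x + q x) / 2)

private lemma gibbs_aux (a b : ℝ) (ha : 0 < a) (hb : 0 < b) :
    a - b ≤ a * Real.log (a / b) := by
  have h := Real.log_le_sub_one_of_pos (show (0:ℝ) < b / a from div_pos hb ha)
  have hlog : Real.log (a / b) = - Real.log (b / a) := by
    rw [← Real.log_inv, inv_div]
  have hmul : a * Real.log (b / a) ≤ a * (b / a - 1) :=
    mul_le_mul_of_nonneg_left h ha.le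
  have : a * (b / a - 1) = b - a := by field_simp
  rw [hlog]
  nlinarith

/-- the optimal cross-entropy loss equals `ln 2` minus the
Jensen–Shannon divergence, and is a lower bound for any classifier. -/
theorem stmt14 {X : Type*} [Fintype X] [Nonempty X]
    (p₀ p₁ : X → ℝ)
    (h₀ : ∀ x, 0 < p₀ x) (h₀1 : ∑ x : X, p₀ x = 1)
    (h₁ : ∀ x, 0 < p₁ x) (h₁1 : ∑ x : X, p₁ x = 1) :
    (∀ yhat : X → ℝ, (∀ x, 0 < yhat x) → (∀ x, yhat x < 1) →
      Real.log 2 - jsDiv p₀ p₁ ≤ bceLoss p₀ p₁ yhat) ∧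
    bceLoss p₀ p₁ (fun x => p₁ x / (p₀ x + p₁ x)) = Real.log 2 - jsDiv p₀ p₁ := by
  have hs : ∀ x, 0 < p₀ x + p₁ x := fun x => add_pos (h₀ x) (h₁ x)
  -- rewrite log2 - jsDiv
  have esplit : ∀ (p : X → ℝ), (∀ x, 0 < p x) → (∑ x : X, p x = 1) →
      ∑ x : X, p x * Real.log (p x / ((p₀ x + p₁ x) / 2))
        = (∑ x : X, p x * Real.log (p x / (p₀ x + p₁ x))) + Real.log 2 := by
    intro p hp hp1
    have : ∀ x : X, p x * Real.log (p x / ((p₀ x + p₁ x) / 2))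
        = p x * Real.log (p x / (p₀ x + p₁ x)) + p x * Real.log 2 := by
      intro x
      have h1 : p x / ((p₀ x + p₁ x) / 2) = (p x / (p₀ x + p₁ x)) * 2 := by
        rw [div_div_eq_mul_div, mul_div_right_comm]
      rw [h1, Real.log_mul (ne_of_gt (div_pos (hp x) (hs x))) (by norm_num), mul_add]
    rw [Finset.sum_congr rfl (fun x _ => this x), Finset.sum_add_distrib,
      ← Finset.sum_mul, hp1, one_mul]
  have key : Real.log 2 - jsDiv p₀ p₁
      = -(1/2) * (∑ x : X, p₀ x * Real.log (p₀ x / (p₀ x + p₁ x)))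
        - (1/2) * (∑ x : X, p₁ x * Real.log (p₁ x / (p₀ x + p₁ x))) := by
    unfold jsDiv klDiv
    rw [esplit p₀ h₀ h₀1, esplit p₁ h₁ h₁1]
    ring
  constructor
  · intro yhat hy0 hy1
    rw [key]
    unfold bceLoss
    have hsum : (∑ x : X, p₀ x * Real.log (1 - yhat x))
        + (∑ x : X, p₁ x * Real.log (yhat x))
        ≤ (∑ x : X, p₀ x * Real.log (p₀ x / (p₀ x + p₁ x)))
        + (∑ x : X, p₁ x * Real.log (p₁ x / (p₀ x + p₁ x))) := by
      rw [← Finset.sum_add_distrib, ← Finset.sum_add_distrib]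
      apply Finset.sum_le_sum
      intro x _
      have h1t : 0 < 1 - yhat x := by linarith [hy1 x]
      have hA : p₀ x - (p₀ x + p₁ x) * (1 - yhat x)
          ≤ p₀ x * Real.log (p₀ x / ((p₀ x + p₁ x) * (1 - yhat x))) :=
        gibbs_aux _ _ (h₀ x) (mul_pos (hs x) h1t)
      have hB : p₁ x - (p₀ x + p₁ x) * yhat x
          ≤ p₁ x * Real.log (p₁ x / ((p₀ x + p₁ x) * yhat x)) :=
        gibbs_aux _ _ (h₁ x) (mul_pos (hs x) (hy0 x))
      have eA : Real.log (p₀ x / ((p₀ x + p₁ x) * (1 - yhat x)))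
          = Real.log (p₀ x / (p₀ x + p₁ x)) - Real.log (1 - yhat x) := by
        rw [← div_div, Real.log_div (ne_of_gt (div_pos (h₀ x) (hs x))) (ne_of_gt h1t)]
      have eB : Real.log (p₁ x / ((p₀ x + p₁ x) * yhat x))
          = Real.log (p₁ x / (p₀ x + p₁ x)) - Real.log (yhat x) := by
        rw [← div_div, Real.log_div (ne_of_gt (div_pos (h₁ x) (hs x))) (ne_of_gt (hy0 x))]
      rw [eA] at hA; rw [eB] at hB
      nlinarith [hA, hB]
    linarith
  · rw [key]
    have e0 : ∀ x : X, (1 : ℝ) - p₁ x / (p₀ x + p₁ x) = p₀ x / (p₀ x + p₁ x) := by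
      intro x
      field_simp [(hs x).ne']
      ring
    unfold bceLoss
    beta_reduce
    simp only [e0]
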